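/- For each k ≥ 1, the sum Σ_{e} x^{len(e) − k − 1} over all 1̲2̲0-avoiding primitive ascent sequences e with k ascents, evaluated at x = 1, equals 2^{binomial(k+1,2)}; in particular, the number of 1̲2̲0-avoiding primitive ascent sequences with k ascents is 2^{k(k+1)/2}. -/

import Mathlib

open scoped Classical

/-- `e` is an inversion sequence (0-based indexing: `e i < i+1`, i.e. `e i ≤ i`). -/
def IsInvSeq (e : List ℕ) : Prop := ∀ i, i < e.length → e.getD i 0 ≤ i

/-- Number of ascents of `e`. -/
def ascents (e : List ℕ) : ℕ :=
  ((List.range (e.length - 1)).filter (fun i => decide (e.getD i 0 < e.getD (i + 1) 0))).length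

/-- `e` is an ascent sequence. -/
def IsAscSeq (e : List ℕ) : Prop :=
  IsInvSeq e ∧ ∀ i, i + 1 < e.length → e.getD (i + 1) 0 ≤ ascents (e.take (i + 1)) + 1

/-- `e` avoids the vincular pattern 12-0 : no indices `1 ≤ i < j < e.length`
(0-based) with `e j < e (i-1) < e i`. -/
def Avoids120 (e : List ℕ) : Prop :=
  ¬ ∃ i j, 1 ≤ i ∧ i < j ∧ j < e.length ∧
      e.getD j 0 < e.getD (i - 1) 0 ∧ e.getD (i - 1) 0 < e.getD i 0

/-- `e` is primitive: no two equal consecutive entries. -/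
def IsPrimitive (e : List ℕ) : Prop := ∀ i, i + 1 < e.length → e.getD i 0 ≠ e.getD (i + 1) 0

/-! ### basics -/

lemma ascents_eq_card (e : List ℕ) :
    ascents e = ((Finset.range (e.length - 1)).filter
      (fun i => e.getD i 0 < e.getD (i + 1) 0)).card := rfl

lemma getD_take (e : List ℕ) {n i : ℕ} (h : i < n) : (e.take n).getD i 0 = e.getD i 0 := by
  rcases Nat.lt_or_ge i e.length with hi | hi
  · rw [List.getD_eq_getElem _ _ (by simp [Nat.lt_min.2 ⟨h, hi⟩] : i < (e.take n).length),
      List.getElem_take, List.getD_eq_getElem _ _ hi]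
  · rw [List.getD_eq_default _ _ (by simp [hi] : e.length ≤ i) ,
      List.getD_eq_default _ _ (by simp [hi])]

lemma getD_drop (e : List ℕ) {n i : ℕ} (h : n + i < e.length) :
    (e.drop n).getD i 0 = e.getD (n + i) 0 := by
  rw [List.getD_eq_getElem _ _ (by simp [Nat.lt_sub_iff_add_lt'] ; omega : i < (e.drop n).length),
    List.getElem_drop, List.getD_eq_getElem _ _ h]

lemma ascents_take (e : List ℕ) {m : ℕ} (hm : m ≤ e.length) :
    ascents (e.take m) = ((Finset.range (m - 1)).filter
      (fun i => e.getD i 0 < e.getD (i + 1) 0)).card := by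
  rw [ascents_eq_card]
  have hlen : (e.take m).length = m := by simp [hm]
  rw [hlen]
  apply Finset.card_bij (fun i _ => i)
  · intro i hi
    simp only [Finset.mem_filter, Finset.mem_range] at hi ⊢
    refine ⟨hi.1, ?_⟩
    rw [← getD_take e (by omega : i < m), ← getD_take e (by omega : i + 1 < m)]
    exact hi.2
  · intro a _ b _ h; exact h
  · intro i hi
    simp only [Finset.mem_filter, Finset.mem_range] at hi ⊢
    exact ⟨i, ⟨hi.1, by rw [getD_take e (by omega : i < m), getD_take e (by omega : i + 1 < m)]; exact hi.2⟩, rfl⟩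

lemma ascents_le (e : List ℕ) : ascents e ≤ e.length - 1 := by
  rw [ascents_eq_card]
  exact le_trans (Finset.card_filter_le _ _) (by simp)

/-! ### runs -/

def runOf (A : Finset ℕ) (b : ℕ) : List ℕ := (A.sort (· ≤ ·)).reverse ++ [b]

lemma runOf_ne_nil (A : Finset ℕ) (b : ℕ) : runOf A b ≠ [] := by simp [runOf]

lemma runOf_length (A : Finset ℕ) (b : ℕ) : (runOf A b).length = A.card + 1 := by
  simp [runOf]

lemma runOf_getLast (A : Finset ℕ) (b : ℕ) : (runOf A b).getLast (runOf_ne_nil A b) = b := by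
  simp [runOf, List.getLast_append]

lemma runOf_mem {A : Finset ℕ} {b x : ℕ} (h : x ∈ runOf A b) : x ∈ A ∨ x = b := by
  simp only [runOf, List.mem_append, List.mem_reverse, Finset.mem_sort, List.mem_singleton] at h
  exact h

lemma runOf_sorted {A : Finset ℕ} {b : ℕ} (hA : ∀ x ∈ A, b < x) :
    (runOf A b).Pairwise (· > ·) := by
  rw [runOf, List.pairwise_append]
  refine ⟨?_, List.pairwise_singleton _ _, ?_⟩
  · rw [List.pairwise_reverse]
    exact (Finset.sortedLT_sort A).pairwise
  · intro x hx y hy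
    rw [List.mem_reverse, Finset.mem_sort] at hx
    rw [List.mem_singleton] at hy
    subst hy
    exact hA x hx

lemma runOf_head_of_ne (A : Finset ℕ) (b : ℕ) (hA : A ≠ ∅) :
    (runOf A b).getD 0 0 ∈ A := by
  have h1 : 0 < (A.sort (· ≤ ·)).reverse.length := by
    simp only [List.length_reverse, Finset.length_sort]
    exact Finset.card_pos.2 (Finset.nonempty_iff_ne_empty.2 hA)
  rw [runOf, List.getD_append _ _ _ _ h1, List.getD_eq_getElem _ _ h1]
  have := List.getElem_mem h1
  rw [List.mem_reverse, Finset.mem_sort] at this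
  exact this

lemma runOf_head_of_empty (b : ℕ) : (runOf ∅ b).getD 0 0 = b := by
  simp [runOf]

lemma runOf_of_sorted {y : List ℕ} (hy : y ≠ []) (hs : y.Pairwise (· > ·)) :
    runOf (y.dropLast.reverse.toFinset) (y.getLast hy) = y := by
  have hdl : y.dropLast.Pairwise (· > ·) := hs.sublist (List.dropLast_sublist y)
  have hrev : y.dropLast.reverse.Pairwise (· < ·) := by
    rw [List.pairwise_reverse]; exact hdl
  have hnd : y.dropLast.reverse.Nodup := hrev.nodup
  have hsort : (y.dropLast.reverse.toFinset).sort (· ≤ ·) = y.dropLast.reverse :=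
    (List.toFinset_sort _ hnd).2 (hrev.imp (fun h => le_of_lt h))
  rw [runOf, hsort, List.reverse_reverse, List.dropLast_append_getLast]

/-! ### sorted-gt index facts -/

lemma sorted_gt_getD_strict {y : List ℕ} (hs : y.Pairwise (· > ·)) {i j : ℕ}
    (hij : i < j) (hj : j < y.length) : y.getD j 0 < y.getD i 0 := by
  rw [List.getD_eq_getElem _ _ hj, List.getD_eq_getElem _ _ (lt_trans hij hj)]
  exact List.pairwise_iff_getElem.1 hs i j _ hj hij

lemma sorted_gt_getD_le {y : List ℕ} (hs : y.Pairwise (· > ·)) {i j : ℕ}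
    (hij : i ≤ j) (hj : j < y.length) : y.getD j 0 ≤ y.getD i 0 := by
  rcases Nat.eq_or_lt_of_le hij with h | h
  · subst h; rfl
  · exact le_of_lt (sorted_gt_getD_strict hs h hj)

/-- ascent-bottoms are at most the last entry -/
lemma bottom_le_last {x : List ℕ} (hav : Avoids120 x) {i : ℕ} (hi : i + 1 < x.length)
    (ha : x.getD i 0 < x.getD (i + 1) 0) : x.getD i 0 ≤ x.getD (x.length - 1) 0 := by
  rcases Nat.eq_or_lt_of_le (by omega : i + 1 ≤ x.length - 1) with h | h
  · rw [← h]; omega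
  · by_contra hc
    exact hav ⟨i + 1, x.length - 1, by omega, h, by omega,
      by rw [Nat.add_sub_cancel]; omega, by rw [Nat.add_sub_cancel]; exact ha⟩

/-! ### appending a run -/

lemma ascents_append_ge (x z : List ℕ) : ascents x ≤ ascents (x ++ z) := by
  rw [ascents_eq_card, ascents_eq_card]
  apply Finset.card_le_card
  intro i hi
  simp only [Finset.mem_filter, Finset.mem_range] at hi ⊢
  have hlen : x.length - 1 ≤ (x ++ z).length - 1 := by simp; omega
  refine ⟨by omega, ?_⟩
  rw [List.getD_append _ _ _ _ (by omega), List.getD_append _ _ _ _ (by omega)]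
  exact hi.2

lemma ascents_append_run {x y : List ℕ} (hxne : x ≠ []) (hyne : y ≠ [])
    (hys : y.Pairwise (· > ·)) (hasc : x.getD (x.length - 1) 0 < y.getD 0 0) :
    ascents (x ++ y) = ascents x + 1 := by
  have hn : 1 ≤ x.length := List.length_pos_iff.2 hxne
  have hm : 1 ≤ y.length := List.length_pos_iff.2 hyne
  rw [ascents_eq_card]
  have hlen : (x ++ y).length - 1 = (x.length - 1) + y.length := by simp; omega
  rw [hlen]
  have hsplit : Finset.range (x.length - 1 + y.length)
      = Finset.range (x.length - 1) ∪ Finset.Ico (x.length - 1) (x.length - 1 + y.length) := by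
    rw [Finset.range_eq_Ico, Finset.range_eq_Ico, Finset.Ico_union_Ico_eq_Ico (Nat.zero_le _) (by omega)]
  rw [hsplit, Finset.filter_union,
    Finset.card_union_of_disjoint (Finset.disjoint_filter_filter (by
      rw [Finset.disjoint_left]; intro a ha hb
      rw [Finset.mem_range] at ha; rw [Finset.mem_Ico] at hb; omega))]
  have e1 : (Finset.range (x.length - 1)).filter
        (fun i => (x ++ y).getD i 0 < (x ++ y).getD (i + 1) 0)
      = (Finset.range (x.length - 1)).filter (fun i => x.getD i 0 < x.getD (i + 1) 0) := by
    apply Finset.filter_congr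
    intro i hi
    rw [Finset.mem_range] at hi
    rw [List.getD_append _ _ _ _ (by omega), List.getD_append _ _ _ _ (by omega)]
  have e2 : (Finset.Ico (x.length - 1) (x.length - 1 + y.length)).filter
        (fun i => (x ++ y).getD i 0 < (x ++ y).getD (i + 1) 0) = {x.length - 1} := by
    apply Finset.ext
    intro i
    simp only [Finset.mem_filter, Finset.mem_Ico, Finset.mem_singleton]
    constructor
    · rintro ⟨⟨h1, h2⟩, hp⟩
      by_contra hne
      have hge : x.length ≤ i := by omega
      rw [List.getD_append_right _ _ _ _ hge, List.getD_append_right _ _ _ _ (by omega)] at hp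
      have := sorted_gt_getD_strict hys (show i - x.length < i + 1 - x.length by omega)
        (show i + 1 - x.length < y.length by omega)
      omega
    · rintro rfl
      refine ⟨⟨le_refl _, by omega⟩, ?_⟩
      have hx1 : x.length - 1 + 1 = x.length := by omega
      rw [hx1, List.getD_append _ _ _ _ (by omega),
        List.getD_append_right _ _ _ _ (le_refl _), Nat.sub_self]
      exact hasc
  rw [e1, e2, ← ascents_eq_card, Finset.card_singleton]

lemma ext_props {x y : List ℕ} {k : ℕ}
    (hA : IsAscSeq x) (hP : IsPrimitive x) (hV : Avoids120 x)
    (hk : ascents x = k) (hxne : x ≠ []) (hyne : y ≠ [])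
    (hys : y.Pairwise (· > ·))
    (hbound : y.getD 0 0 ≤ k + 1)
    (hasc : x.getD (x.length - 1) 0 < y.getD 0 0)
    (hmin : x.getD (x.length - 1) 0 ≤ y.getD (y.length - 1) 0)
    (hxlen : k + 1 ≤ x.length) :
    IsAscSeq (x ++ y) ∧ IsPrimitive (x ++ y) ∧ Avoids120 (x ++ y) ∧
      ascents (x ++ y) = k + 1 := by
  have hn : 1 ≤ x.length := List.length_pos_iff.2 hxne
  have hm : 1 ≤ y.length := List.length_pos_iff.2 hyne
  have hlen : (x ++ y).length = x.length + y.length := by simp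
  have yub : ∀ j, j < y.length → y.getD j 0 ≤ y.getD 0 0 :=
    fun j hj => sorted_gt_getD_le hys (Nat.zero_le j) hj
  have ylb : ∀ j, j < y.length → y.getD (y.length - 1) 0 ≤ y.getD j 0 :=
    fun j hj => sorted_gt_getD_le hys (by omega) (by omega)
  refine ⟨⟨?_, ?_⟩, ?_, ?_, ?_⟩
  · -- IsInvSeq
    intro i hi
    rw [hlen] at hi
    rcases Nat.lt_or_ge i x.length with h | h
    · rw [List.getD_append _ _ _ _ h]; exact hA.1 i h
    · rw [List.getD_append_right _ _ _ _ h]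
      have := yub (i - x.length) (by omega)
      omega
  · -- ascent-sequence bound
    intro i hi
    rw [hlen] at hi
    rcases Nat.lt_or_ge (i + 1) x.length with h | h
    · rw [List.getD_append _ _ _ _ h]
      have htake : (x ++ y).take (i + 1) = x.take (i + 1) := by
        rw [List.take_append, Nat.sub_eq_zero_of_le (by omega), List.take_zero,
          List.append_nil]
      rw [htake]
      exact hA.2 i h
    · rw [List.getD_append_right _ _ _ _ h]
      have h1 : y.getD (i + 1 - x.length) 0 ≤ y.getD 0 0 := yub _ (by omega)
      have htake : (x ++ y).take (i + 1) = x ++ y.take (i + 1 - x.length) := by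
        rw [List.take_append, List.take_of_length_le (by omega)]
      have h2 : ascents x ≤ ascents ((x ++ y).take (i + 1)) := by
        rw [htake]; exact ascents_append_ge x _
      omega
  · -- primitive
    intro i hi
    rw [hlen] at hi
    rcases Nat.lt_or_ge (i + 1) x.length with h | h
    · rw [List.getD_append _ _ _ _ (by omega), List.getD_append _ _ _ _ h]
      exact hP i h
    · rcases Nat.eq_or_lt_of_le h with h' | h'
      · have hi' : i = x.length - 1 := by omega
        have e1 : (x ++ y).getD i 0 = x.getD (x.length - 1) 0 := by
          rw [List.getD_append x y 0 i (by omega), hi']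
        have e2 : (x ++ y).getD (i + 1) 0 = y.getD 0 0 := by
          rw [List.getD_append_right x y 0 (i + 1) (by omega),
            show i + 1 - x.length = 0 by omega]
        rw [e1, e2]
        exact ne_of_lt hasc
      · rw [List.getD_append_right x y 0 i (by omega),
          List.getD_append_right x y 0 (i + 1) (by omega)]
        have := sorted_gt_getD_strict hys (show i - x.length < i + 1 - x.length by omega)
          (by omega)
        omega
  · -- Avoids120
    rintro ⟨i, j, h1, hij, hj, hpat1, hpat2⟩
    rw [hlen] at hj
    rcases Nat.lt_or_ge i x.length with hilt | hige
    · -- i-1, i within x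
      rw [List.getD_append x y 0 (i - 1) (by omega), List.getD_append x y 0 i hilt] at hpat2
      rcases Nat.lt_or_ge j x.length with hjlt | hjge
      · rw [List.getD_append x y 0 j hjlt, List.getD_append x y 0 (i - 1) (by omega)] at hpat1
        exact hV ⟨i, j, h1, hij, hjlt, hpat1, hpat2⟩
      · rw [List.getD_append_right x y 0 j hjge,
          List.getD_append x y 0 (i - 1) (by omega)] at hpat1
        have hb : x.getD (i - 1) 0 ≤ x.getD (x.length - 1) 0 := by
          have := bottom_le_last hV (i := i - 1) (by omega : i - 1 + 1 < x.length)
            (by rw [show i - 1 + 1 = i by omega]; exact hpat2)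
          exact this
        have := ylb (j - x.length) (by omega)
        omega
    · rcases Nat.eq_or_lt_of_le hige with h' | h'
      · -- i = x.length : boundary ascent, bottom = last of x
        rw [List.getD_append_right x y 0 j (by omega), List.getD_append x y 0 (i - 1) (by omega),
          show i - 1 = x.length - 1 by omega] at hpat1
        have := ylb (j - x.length) (by omega)
        omega
      · -- i - 1, i within y : descent, contradiction
        rw [List.getD_append_right x y 0 (i - 1) (by omega),
          List.getD_append_right x y 0 i (by omega)] at hpat2
        have := sorted_gt_getD_strict hys (show i - 1 - x.length < i - x.length by omega)
          (by omega)
        omega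
  · rw [ascents_append_run hxne hyne hys hasc, hk]

/-! ### prefixes -/

lemma take_props {e : List ℕ} (hA : IsAscSeq e) (hP : IsPrimitive e) (hV : Avoids120 e)
    (m : ℕ) : IsAscSeq (e.take m) ∧ IsPrimitive (e.take m) ∧ Avoids120 (e.take m) := by
  have hlen : (e.take m).length = min m e.length := by simp
  refine ⟨⟨?_, ?_⟩, ?_, ?_⟩
  · intro i hi
    rw [hlen] at hi
    rw [getD_take e (by omega)]
    exact hA.1 i (by omega)
  · intro i hi
    rw [hlen] at hi
    rw [getD_take e (by omega), List.take_take, Nat.min_eq_left (by omega)]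
    exact hA.2 i (by omega)
  · intro i hi
    rw [hlen] at hi
    rw [getD_take e (by omega), getD_take e (by omega)]
    exact hP i (by omega)
  · rintro ⟨i, j, h1, hij, hj, hp1, hp2⟩
    rw [hlen] at hj
    rw [getD_take e (by omega), getD_take e (by omega)] at hp1
    rw [getD_take e (by omega), getD_take e (by omega)] at hp2
    exact hV ⟨i, j, h1, hij, by omega, hp1, hp2⟩

lemma step_sorted {l : List ℕ} (hs : ∀ i, i + 1 < l.length → l.getD (i + 1) 0 < l.getD i 0) :
    l.Pairwise (· > ·) := by
  rw [List.pairwise_iff_getElem]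
  intro a b ha hb hab
  have key : ∀ c, a < c → c < l.length → l.getD c 0 < l.getD a 0 := by
    intro c
    induction c with
    | zero => omega
    | succ n ih =>
      intro h1 h2
      rcases Nat.lt_or_ge a n with h | h
      · exact lt_trans (hs n h2) (ih h (by omega))
      · have : a = n := by omega
        subst this
        exact hs a h2
  have := key b hab hb
  rwa [List.getD_eq_getElem _ _ hb, List.getD_eq_getElem _ _ (by omega)] at this

/-! ### decomposition of a sequence with k+1 ascents -/

lemma decompose {e : List ℕ} {k : ℕ} (hA : IsAscSeq e) (hP : IsPrimitive e)
    (hV : Avoids120 e) (hk : ascents e = k + 1) :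
    ∃ x y : List ℕ, e = x ++ y ∧ x ≠ [] ∧ y ≠ [] ∧
      IsAscSeq x ∧ IsPrimitive x ∧ Avoids120 x ∧ ascents x = k ∧
      y.Pairwise (· > ·) ∧ y.getD 0 0 ≤ k + 1 ∧
      x.getD (x.length - 1) 0 < y.getD 0 0 ∧
      x.getD (x.length - 1) 0 ≤ y.getD (y.length - 1) 0 := by
  classical
  set T := (Finset.range (e.length - 1)).filter
    (fun i => e.getD i 0 < e.getD (i + 1) 0) with hT
  have hcard : T.card = k + 1 := (ascents_eq_card e ▸ hk)
  have hTne : T.Nonempty := Finset.card_pos.1 (by omega)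
  obtain ⟨p, hpmem, hpmax⟩ : ∃ p, p ∈ T ∧ ∀ i ∈ T, i ≤ p :=
    ⟨T.max' hTne, T.max'_mem hTne, fun i hi => T.le_max' i hi⟩
  have hpmem' := hpmem
  rw [hT, Finset.mem_filter, Finset.mem_range] at hpmem'
  obtain ⟨hplt, hpasc⟩ := hpmem'
  have hmax : ∀ i, p < i → i < e.length - 1 → ¬ (e.getD i 0 < e.getD (i + 1) 0) := by
    intro i h1 h2 hc
    have hiT : i ∈ T := by
      rw [hT, Finset.mem_filter, Finset.mem_range]
      exact ⟨h2, hc⟩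
    have := hpmax i hiT
    omega
  have hlen : p + 1 < e.length := by omega
  obtain ⟨hxA, hxP, hxV⟩ := take_props hA hP hV (p + 1)
  have hxlen : (e.take (p + 1)).length = p + 1 := by
    rw [List.length_take]; omega
  have hylen : (e.drop (p + 1)).length = e.length - (p + 1) := by simp
  have hxne : e.take (p + 1) ≠ [] := by
    intro h
    rw [h] at hxlen
    simp only [List.length_nil] at hxlen
    omega
  have hyne : e.drop (p + 1) ≠ [] := by
    intro h
    rw [h] at hylen
    simp only [List.length_nil] at hylen
    omega
  have hxlast : (e.take (p + 1)).getD ((e.take (p + 1)).length - 1) 0 = e.getD p 0 := by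
    rw [hxlen, Nat.add_sub_cancel, getD_take e (by omega)]
  have hyget : ∀ j, j < e.length - (p + 1) → (e.drop (p + 1)).getD j 0 = e.getD (p + 1 + j) 0 := by
    intro j hj
    exact getD_drop e (by omega)
  have hTsplit : T = insert p ((Finset.range p).filter
      (fun i => e.getD i 0 < e.getD (i + 1) 0)) := by
    apply Finset.ext
    intro i
    rw [hT, Finset.mem_insert, Finset.mem_filter, Finset.mem_filter,
      Finset.mem_range, Finset.mem_range]
    constructor
    · rintro ⟨h1, h2⟩
      have hiT : i ∈ T := by
        rw [hT, Finset.mem_filter, Finset.mem_range]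
        exact ⟨h1, h2⟩
      rcases Nat.eq_or_lt_of_le (hpmax i hiT) with h | h
      · exact Or.inl h
      · exact Or.inr ⟨h, h2⟩
    · rintro (rfl | ⟨h1, h2⟩)
      · exact ⟨hplt, hpasc⟩
      · exact ⟨by omega, h2⟩
  have hxasc : ascents (e.take (p + 1)) = k := by
    rw [ascents_take e (by omega), Nat.add_sub_cancel]
    have : T.card = ((Finset.range p).filter
        (fun i => e.getD i 0 < e.getD (i + 1) 0)).card + 1 := by
      rw [hTsplit, Finset.card_insert_of_notMem (by
        intro h
        rw [Finset.mem_filter, Finset.mem_range] at h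
        omega)]
    omega
  have hysorted : (e.drop (p + 1)).Pairwise (· > ·) := by
    apply step_sorted
    intro j hj
    rw [hylen] at hj
    rw [hyget j (by omega), hyget (j + 1) (by omega)]
    have hni : ¬ (e.getD (p + 1 + j) 0 < e.getD (p + 1 + j + 1) 0) :=
      hmax (p + 1 + j) (by omega) (by omega)
    have hne : e.getD (p + 1 + j) 0 ≠ e.getD (p + 1 + j + 1) 0 :=
      hP (p + 1 + j) (by omega)
    have harr : p + 1 + (j + 1) = p + 1 + j + 1 := by omega
    rw [harr]
    omega
  refine ⟨e.take (p + 1), e.drop (p + 1), (List.take_append_drop _ e).symm,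
    hxne, hyne, hxA, hxP, hxV, hxasc, hysorted, ?_, ?_, ?_⟩
  · rw [hyget 0 (by omega), Nat.add_zero]
    have := hA.2 p hlen
    rw [← hxasc]
    exact this
  · rw [hxlast, hyget 0 (by omega), Nat.add_zero]
    exact hpasc
  · rw [hxlast, hylen, hyget (e.length - (p + 1) - 1) (by omega),
      show p + 1 + (e.length - (p + 1) - 1) = e.length - 1 by omega]
    exact bottom_le_last hV hlen hpasc

/-! ### uniqueness of the split -/

lemma split_aux {x₁ y₁ x₂ y₂ : List ℕ} (he : x₁ ++ y₁ = x₂ ++ y₂)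
    (hy₂ : y₂ ≠ []) (hs₁ : y₁.Pairwise (· > ·))
    (ha₂ : x₂.getD (x₂.length - 1) 0 < y₂.getD 0 0)
    (hlt : x₁.length < x₂.length) : False := by
  have hx₂ : x₂ ≠ [] := by intro h; rw [h] at hlt; simp at hlt
  have hn₂ : 1 ≤ x₂.length := List.length_pos_iff.2 hx₂
  have hm₂ : 1 ≤ y₂.length := List.length_pos_iff.2 hy₂
  have hlene : x₁.length + y₁.length = x₂.length + y₂.length := by
    have := congrArg List.length he
    simpa using this
  set q := x₂.length - 1 with hq
  have hA : (x₂ ++ y₂).getD q 0 < (x₂ ++ y₂).getD (q + 1) 0 := by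
    rw [List.getD_append x₂ y₂ 0 q (by omega),
      List.getD_append_right x₂ y₂ 0 (q + 1) (by omega),
      show q + 1 - x₂.length = 0 by omega]
    exact ha₂
  rw [← he] at hA
  rw [List.getD_append_right x₁ y₁ 0 q (by omega),
    List.getD_append_right x₁ y₁ 0 (q + 1) (by omega)] at hA
  have := sorted_gt_getD_strict hs₁ (show q - x₁.length < q + 1 - x₁.length by omega)
    (show q + 1 - x₁.length < y₁.length by omega)
  omega

lemma unique_split {x₁ y₁ x₂ y₂ : List ℕ} (he : x₁ ++ y₁ = x₂ ++ y₂)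
    (hy₁ : y₁ ≠ []) (hy₂ : y₂ ≠ [])
    (hs₁ : y₁.Pairwise (· > ·)) (hs₂ : y₂.Pairwise (· > ·))
    (ha₁ : x₁.getD (x₁.length - 1) 0 < y₁.getD 0 0)
    (ha₂ : x₂.getD (x₂.length - 1) 0 < y₂.getD 0 0) :
    x₁ = x₂ ∧ y₁ = y₂ := by
  have hlen : x₁.length = x₂.length := by
    rcases lt_trichotomy x₁.length x₂.length with h | h | h
    · exact absurd (split_aux he hy₂ hs₁ ha₂ h) (fun x => x)
    · exact h
    · exact absurd (split_aux he.symm hy₁ hs₂ ha₁ h) (fun x => x)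
  exact List.append_inj he hlen

/-! ### the counting function -/

def fcount (k b : ℕ) : ℕ := 2 ^ (b.choose 2) * ∏ m ∈ Finset.Icc (b + 1) k, (2 ^ m - 1)

lemma fc_top (k : ℕ) : fcount k k = 2 ^ (k.choose 2) := by
  rw [fcount, Finset.Icc_eq_empty (by omega), Finset.prod_empty, mul_one]

lemma fc_succ {k b : ℕ} (h : b ≤ k) : fcount (k + 1) b = (2 ^ (k + 1) - 1) * fcount k b := by
  rw [fcount, fcount]
  have hins : Finset.Icc (b + 1) (k + 1) = insert (k + 1) (Finset.Icc (b + 1) k) := by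
    ext i
    simp only [Finset.mem_Icc, Finset.mem_insert]
    omega
  rw [hins, Finset.prod_insert (by simp [Finset.mem_Icc])]
  ring

lemma fc_step {k b : ℕ} (h : b + 1 ≤ k) :
    2 ^ b * fcount k b = (2 ^ (b + 1) - 1) * fcount k (b + 1) := by
  rw [fcount, fcount]
  have hins : Finset.Icc (b + 1) k = insert (b + 1) (Finset.Icc (b + 2) k) := by
    ext i
    simp only [Finset.mem_Icc, Finset.mem_insert]
    omega
  rw [hins, Finset.prod_insert (by simp [Finset.mem_Icc])]
  have hch : (b + 1).choose 2 = b + b.choose 2 := by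
    rw [Nat.choose_succ_succ, Nat.choose_one_right]
  rw [hch, pow_add]
  ring

lemma fc_sum {k b : ℕ} (h : b ≤ k) :
    ∑ b' ∈ Finset.range (b + 1), fcount k b' = 2 ^ b * fcount k b := by
  induction b with
  | zero => simp
  | succ b ih =>
    rw [Finset.sum_range_succ, ih (by omega), fc_step (by omega)]
    have h1 : 1 ≤ 2 ^ (b + 1) := Nat.one_le_two_pow
    have h2 : (2 ^ (b + 1) - 1) * fcount k (b + 1) + fcount k (b + 1)
        = 2 ^ (b + 1) * fcount k (b + 1) := by
      rw [Nat.sub_mul, one_mul]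
      have := Nat.le_mul_of_pos_left (fcount k (b + 1)) (by omega : 0 < 2 ^ (b + 1))
      omega
    rw [h2]

/-! ### the finsets -/

def exts (k b b' : ℕ) : Finset (Finset ℕ) :=
  (Finset.Icc (b + 1) k).powerset.filter (fun A => A = ∅ → (b' < b ∧ b ≤ k))

def Sb : ℕ → ℕ → Finset (List ℕ)
  | 0, b => if b = 0 then {[0]} else ∅
  | (k + 1), b => (Finset.range (b + 1)).biUnion (fun b' =>
      ((Sb k b') ×ˢ exts (k + 1) b b').image (fun p => p.1 ++ runOf p.2 b))

lemma Sb_zero (b : ℕ) : Sb 0 b = if b = 0 then {[0]} else ∅ := rfl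

lemma Sb_succ (k b : ℕ) : Sb (k + 1) b = (Finset.range (b + 1)).biUnion (fun b' =>
    ((Sb k b') ×ˢ exts (k + 1) b b').image (fun p => p.1 ++ runOf p.2 b)) := rfl

lemma exts_empty {k b : ℕ} (h : k < b) (b' : ℕ) : exts k b b' = ∅ := by
  ext A
  simp only [exts, Finset.mem_filter, Finset.mem_powerset, Finset.notMem_empty, iff_false]
  rintro ⟨hsub, hcond⟩
  have hA : A = ∅ := by
    rw [← Finset.subset_empty, ← Finset.Icc_eq_empty (show ¬ b + 1 ≤ k by omega)]
    exact hsub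
  have := hcond hA
  omega

lemma Sb_empty : ∀ k b, k < b → Sb k b = ∅ := by
  intro k
  cases k with
  | zero => intro b h; rw [Sb_zero, if_neg (by omega)]
  | succ k =>
    intro b h
    rw [Sb_succ]
    apply Finset.eq_empty_of_forall_notMem
    intro e he
    rw [Finset.mem_biUnion] at he
    obtain ⟨b', _, hmem⟩ := he
    rw [exts_empty h, Finset.product_empty, Finset.image_empty] at hmem
    exact absurd hmem (Finset.notMem_empty e)

lemma card_exts_lt {k b b' : ℕ} (hb : b ≤ k) (h : b' < b) :
    (exts k b b').card = 2 ^ (k - b) := by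
  rw [exts]
  rw [Finset.filter_true_of_mem (by intro A _; intro _; exact ⟨h, hb⟩)]
  rw [Finset.card_powerset, Nat.card_Icc]
  congr 1
  omega

lemma card_exts_eq {k b : ℕ} (hb : b ≤ k) :
    (exts k b b).card = 2 ^ (k - b) - 1 := by
  rw [exts]
  have : (Finset.Icc (b + 1) k).powerset.filter (fun A => A = ∅ → (b < b ∧ b ≤ k))
      = (Finset.Icc (b + 1) k).powerset.erase ∅ := by
    ext A
    simp only [Finset.mem_filter, Finset.mem_powerset, Finset.mem_erase]
    constructor
    · rintro ⟨h1, h2⟩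
      refine ⟨fun hA => by have := h2 hA; omega, h1⟩
    · rintro ⟨h1, h2⟩
      exact ⟨h2, fun hA => absurd hA h1⟩
  rw [this, Finset.card_erase_of_mem (Finset.empty_mem_powerset _),
    Finset.card_powerset, Nat.card_Icc]
  congr 2
  omega

/-! ### small helpers -/

lemma getD_last_eq {l : List ℕ} (h : l ≠ []) : l.getD (l.length - 1) 0 = l.getLast h := by
  have h1 : 1 ≤ l.length := List.length_pos_iff.2 h
  rw [List.getLast_eq_getElem, List.getD_eq_getElem _ _ (by omega)]

lemma getD_append_last (x : List ℕ) {y : List ℕ} (hyne : y ≠ []) :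
    (x ++ y).getD ((x ++ y).length - 1) 0 = y.getD (y.length - 1) 0 := by
  have hm : 1 ≤ y.length := List.length_pos_iff.2 hyne
  rw [List.length_append, List.getD_append_right x y 0 _ (by omega)]
  congr 1
  omega

lemma mem_le_head {y : List ℕ} (hs : y.Pairwise (· > ·)) {v : ℕ} (hv : v ∈ y) :
    v ≤ y.getD 0 0 := by
  obtain ⟨j, hj, rfl⟩ := List.mem_iff_getElem.1 hv
  rw [← List.getD_eq_getElem y 0 hj]
  exact sorted_gt_getD_le hs (Nat.zero_le j) hj

lemma mem_dropLast_gt_last {y : List ℕ} (hy : y ≠ []) (hs : y.Pairwise (· > ·)) {v : ℕ}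
    (hv : v ∈ y.dropLast) : y.getLast hy < v := by
  have h2 : List.Pairwise (· > ·) (y.dropLast ++ [y.getLast hy]) := by
    rw [List.dropLast_append_getLast]; exact hs
  exact (List.pairwise_append.1 h2).2.2 v hv _ (List.mem_singleton_self _)

lemma props_single : IsAscSeq [0] ∧ IsPrimitive [0] ∧ Avoids120 [0] ∧ ascents [0] = 0 := by
  refine ⟨⟨?_, ?_⟩, ?_, ?_, rfl⟩
  · intro i hi
    simp only [List.length_singleton] at hi
    have : i = 0 := by omega
    subst this
    simp
  · intro i hi
    simp only [List.length_singleton] at hi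
    omega
  · intro i hi
    simp only [List.length_singleton] at hi
    omega
  · rintro ⟨i, j, h1, h2, h3, _⟩
    simp only [List.length_singleton] at h3
    omega

lemma no_ascent_of_zero {e : List ℕ} (h : ascents e = 0) :
    ∀ i, i < e.length - 1 → ¬ (e.getD i 0 < e.getD (i + 1) 0) := by
  intro i hi hc
  have hmem : i ∈ (Finset.range (e.length - 1)).filter
      (fun i => e.getD i 0 < e.getD (i + 1) 0) :=
    Finset.mem_filter.2 ⟨Finset.mem_range.2 hi, hc⟩
  have : ((Finset.range (e.length - 1)).filter
      (fun i => e.getD i 0 < e.getD (i + 1) 0)).card = 0 := by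
    rw [← ascents_eq_card, h]
  rw [Finset.card_eq_zero.1 this] at hmem
  exact absurd hmem (Finset.notMem_empty i)

/-! ### membership characterization -/

theorem mem_Sb : ∀ k b (e : List ℕ), e ∈ Sb k b ↔
    (IsAscSeq e ∧ IsPrimitive e ∧ Avoids120 e ∧ ascents e = k ∧ e ≠ [] ∧
      e.getD (e.length - 1) 0 = b) := by
  intro k
  induction k with
  | zero =>
    intro b e
    rw [Sb_zero]
    constructor
    · intro he
      by_cases hb : b = 0
      · subst hb
        rw [if_pos rfl, Finset.mem_singleton] at he
        subst he
        obtain ⟨h1, h2, h3, h4⟩ := props_single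
        exact ⟨h1, h2, h3, h4, by simp, by simp⟩
      · rw [if_neg hb] at he
        exact absurd he (Finset.notMem_empty e)
    · rintro ⟨hA, hP, hV, hasc, hne, hlast⟩
      have hlen1 : e.length = 1 := by
        by_contra hl
        have hlen2 : 2 ≤ e.length := by
          have := List.length_pos_iff.2 hne
          omega
        have h0 : e.getD 0 0 = 0 := Nat.le_zero.1 (hA.1 0 (by omega))
        have h1 : ¬ (e.getD 0 0 < e.getD 1 0) := no_ascent_of_zero hasc 0 (by omega)
        have h2 : e.getD 0 0 ≠ e.getD 1 0 := hP 0 (by omega)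
        omega
      obtain ⟨a, ha⟩ := List.length_eq_one_iff.1 hlen1
      subst ha
      have h0 : a = 0 := by
        have := hA.1 0 (by simp)
        simpa using this
      subst h0
      have hb : b = 0 := by simpa using hlast.symm
      subst hb
      simp
  | succ k ih =>
    intro b e
    rw [Sb_succ, Finset.mem_biUnion]
    constructor
    · rintro ⟨b', hb', hmem⟩
      rw [Finset.mem_range] at hb'
      rw [Finset.mem_image] at hmem
      obtain ⟨⟨w, A⟩, hwA, rfl⟩ := hmem
      rw [Finset.mem_product] at hwA
      obtain ⟨hw, hA⟩ := hwA
      rw [ih b' w] at hw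
      obtain ⟨hwA1, hwP, hwV, hwasc, hwne, hwlast⟩ := hw
      rw [exts, Finset.mem_filter, Finset.mem_powerset] at hA
      obtain ⟨hsub, hcond⟩ := hA
      have hgtb : ∀ v ∈ A, b < v := by
        intro v hv
        have := Finset.mem_Icc.1 (hsub hv)
        omega
      have hyne := runOf_ne_nil A b
      have hysort : (runOf A b).Pairwise (· > ·) := runOf_sorted hgtb
      have hylast : (runOf A b).getD ((runOf A b).length - 1) 0 = b := by
        rw [getD_last_eq hyne, runOf_getLast]
      have hy0_le : (runOf A b).getD 0 0 ≤ k + 1 := by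
        by_cases hAe : A = ∅
        · subst hAe
          rw [runOf_head_of_empty]
          exact (hcond rfl).2
        · have h1 := runOf_head_of_ne A b hAe
          have := Finset.mem_Icc.1 (hsub h1)
          omega
      have hy0_gt : w.getD (w.length - 1) 0 < (runOf A b).getD 0 0 := by
        rw [hwlast]
        by_cases hAe : A = ∅
        · subst hAe
          rw [runOf_head_of_empty]
          exact (hcond rfl).1
        · have h1 := runOf_head_of_ne A b hAe
          have := Finset.mem_Icc.1 (hsub h1)
          omega
      have hminw : w.getD (w.length - 1) 0 ≤ (runOf A b).getD ((runOf A b).length - 1) 0 := by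
        rw [hwlast, hylast]
        omega
      have hwlen : k + 1 ≤ w.length := by
        have h1 := ascents_le w
        have h2 := List.length_pos_iff.2 hwne
        omega
      obtain ⟨hA', hP', hV', hasc'⟩ :=
        ext_props hwA1 hwP hwV hwasc hwne hyne hysort hy0_le hy0_gt hminw hwlen
      refine ⟨hA', hP', hV', hasc', ?_, ?_⟩
      · intro h
        exact hwne (List.append_eq_nil_iff.1 h).1
      · rw [getD_append_last w hyne, hylast]
    · rintro ⟨hA, hP, hV, hasc, hne, hlast⟩
      obtain ⟨x, y, heq, hxne, hyne, hxA, hxP, hxV, hxasc, hys, hy0le, hy0gt, hminxy⟩ :=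
        decompose hA hP hV hasc
      subst heq
      have hb : y.getD (y.length - 1) 0 = b := by
        rw [getD_append_last x hyne] at hlast
        exact hlast
      have hb'le : x.getD (x.length - 1) 0 ≤ b := by
        rw [← hb]
        exact hminxy
      have hgl : y.getLast hyne = b := by
        rw [← getD_last_eq hyne, hb]
      refine ⟨x.getD (x.length - 1) 0, Finset.mem_range.2 (by omega), ?_⟩
      rw [Finset.mem_image]
      refine ⟨(x, y.dropLast.reverse.toFinset), ?_, ?_⟩
      · rw [Finset.mem_product]
        constructor
        · rw [ih]
          exact ⟨hxA, hxP, hxV, hxasc, hxne, rfl⟩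
        · rw [exts, Finset.mem_filter, Finset.mem_powerset]
          constructor
          · intro v hv
            rw [List.mem_toFinset, List.mem_reverse] at hv
            have hgt : b < v := by
              have := mem_dropLast_gt_last hyne hys hv
              rw [hgl] at this
              exact this
            have hle : v ≤ k + 1 :=
              le_trans (mem_le_head hys (List.mem_of_mem_dropLast hv)) hy0le
            rw [Finset.mem_Icc]
            exact ⟨by omega, hle⟩
          · intro hAe
            have hAe' : y.dropLast.reverse.toFinset = ∅ := hAe
            have hdl : y.dropLast = [] := by
              by_contra hdl
              obtain ⟨v, hv⟩ := List.exists_mem_of_ne_nil _ hdl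
              have hvin : v ∈ y.dropLast.reverse.toFinset := by
                rw [List.mem_toFinset, List.mem_reverse]
                exact hv
              rw [hAe'] at hvin
              exact absurd hvin (Finset.notMem_empty v)
            have hylen1 : y.length = 1 := by
              have h1 := congrArg List.length hdl
              rw [List.length_dropLast] at h1
              have := List.length_pos_iff.2 hyne
              simp only [List.length_nil] at h1
              omega
            have hy0b : y.getD 0 0 = b := by
              rw [← hb]
              congr 1
              omega
            rw [← hy0b]
            exact ⟨hy0gt, hy0le⟩
      · show x ++ runOf (y.dropLast.reverse.toFinset) b = x ++ y
        congr 1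
        rw [← hgl]
        exact runOf_of_sorted hyne hys

/-! ### cardinality -/

lemma split_shape {k b b' : ℕ} (hb' : b' < b + 1) {w : List ℕ} {A : Finset ℕ}
    (hw : w ∈ Sb k b') (hA : A ∈ exts (k + 1) b b') :
    w ≠ [] ∧ runOf A b ≠ [] ∧ (runOf A b).Pairwise (· > ·) ∧
      w.getD (w.length - 1) 0 < (runOf A b).getD 0 0 ∧ w.getD (w.length - 1) 0 = b' := by
  obtain ⟨_, _, _, _, hwne, hwlast⟩ := (mem_Sb k b' w).1 hw
  rw [exts, Finset.mem_filter, Finset.mem_powerset] at hA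
  obtain ⟨hsub, hcond⟩ := hA
  have hgtb : ∀ v ∈ A, b < v := by
    intro v hv
    have := Finset.mem_Icc.1 (hsub hv)
    omega
  refine ⟨hwne, runOf_ne_nil A b, runOf_sorted hgtb, ?_, hwlast⟩
  rw [hwlast]
  by_cases hAe : A = ∅
  · subst hAe
    rw [runOf_head_of_empty]
    exact (hcond rfl).1
  · have h1 := runOf_head_of_ne A b hAe
    have := Finset.mem_Icc.1 (hsub h1)
    omega

lemma runOf_inj {A₁ A₂ : Finset ℕ} {b : ℕ} (h : runOf A₁ b = runOf A₂ b) : A₁ = A₂ := by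
  have h1 : (A₁.sort (· ≤ ·)).reverse = (A₂.sort (· ≤ ·)).reverse := by
    have := congrArg List.dropLast h
    rwa [runOf, runOf, List.dropLast_concat, List.dropLast_concat] at this
  have h2 : A₁.sort (· ≤ ·) = A₂.sort (· ≤ ·) := by
    have := congrArg List.reverse h1
    rwa [List.reverse_reverse, List.reverse_reverse] at this
  ext v
  rw [← Finset.mem_sort (· ≤ ·), ← Finset.mem_sort (· ≤ ·), h2]

theorem card_Sb : ∀ k b, b ≤ k → (Sb k b).card = fcount k b := by
  intro k
  induction k with
  | zero =>
    intro b hb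
    have : b = 0 := by omega
    subst this
    rw [Sb_zero, if_pos rfl, Finset.card_singleton, fcount]
    simp
  | succ k ih =>
    intro b hb
    rw [Sb_succ, Finset.card_biUnion (by
      intro b₁ hb₁ b₂ hb₂ hne12
      rw [Finset.mem_coe, Finset.mem_range] at hb₁ hb₂
      rw [Function.onFun, Finset.disjoint_left]
      intro e he₁ he₂
      rw [Finset.mem_image] at he₁ he₂
      obtain ⟨⟨w₁, A₁⟩, hp₁, heq₁⟩ := he₁
      obtain ⟨⟨w₂, A₂⟩, hp₂, heq₂⟩ := he₂
      rw [Finset.mem_product] at hp₁ hp₂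
      obtain ⟨hs₁, hr₁, hsort₁, hlt₁, hlast₁⟩ := split_shape hb₁ hp₁.1 hp₁.2
      obtain ⟨hs₂, hr₂, hsort₂, hlt₂, hlast₂⟩ := split_shape hb₂ hp₂.1 hp₂.2
      have heq : w₁ ++ runOf A₁ b = w₂ ++ runOf A₂ b := by rw [heq₁, heq₂]
      obtain ⟨hw, _⟩ := unique_split heq hr₁ hr₂ hsort₁ hsort₂ hlt₁ hlt₂
      rw [hw, hlast₂] at hlast₁
      exact hne12 hlast₁.symm)]
    have hcards : ∀ b' ∈ Finset.range (b + 1),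
        (((Sb k b') ×ˢ exts (k + 1) b b').image (fun p => p.1 ++ runOf p.2 b)).card
          = (Sb k b').card * (exts (k + 1) b b').card := by
      intro b' hb'
      rw [Finset.mem_range] at hb'
      rw [Finset.card_image_of_injOn (by
        rintro ⟨w₁, A₁⟩ hp₁ ⟨w₂, A₂⟩ hp₂ heq
        rw [Finset.mem_coe, Finset.mem_product] at hp₁ hp₂
        obtain ⟨hs₁, hr₁, hsort₁, hlt₁, hlast₁⟩ := split_shape hb' hp₁.1 hp₁.2
        obtain ⟨hs₂, hr₂, hsort₂, hlt₂, hlast₂⟩ := split_shape hb' hp₂.1 hp₂.2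
        obtain ⟨hw, hrun⟩ := unique_split heq hr₁ hr₂ hsort₁ hsort₂ hlt₁ hlt₂
        rw [Prod.mk.injEq]
        exact ⟨hw, runOf_inj hrun⟩), Finset.card_product]
    rw [Finset.sum_congr rfl hcards]
    rcases Nat.eq_or_lt_of_le hb with hbtop | hblt
    · -- b = k + 1
      subst hbtop
      rw [Finset.sum_range_succ]
      have hlastterm : (Sb k (k + 1)).card * (exts (k + 1) (k + 1) (k + 1)).card = 0 := by
        rw [Sb_empty k (k + 1) (by omega), Finset.card_empty, zero_mul]
      rw [hlastterm, add_zero]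
      have hterms : ∀ b' ∈ Finset.range (k + 1),
          (Sb k b').card * (exts (k + 1) (k + 1) b').card = fcount k b' := by
        intro b' hb'
        rw [Finset.mem_range] at hb'
        rw [ih b' (by omega), card_exts_lt (by omega) hb',
          show k + 1 - (k + 1) = 0 by omega, pow_zero, mul_one]
      rw [Finset.sum_congr rfl hterms]
      have hfs : ∑ b' ∈ Finset.range (k + 1), fcount k b' = 2 ^ k * fcount k k :=
        fc_sum (le_refl k)
      rw [hfs, fc_top, fc_top, ← pow_add]
      congr 1
      rw [Nat.choose_succ_succ, Nat.choose_one_right]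
    · -- b ≤ k
      have hbk : b ≤ k := by omega
      rw [Finset.sum_range_succ]
      have hterms : ∀ b' ∈ Finset.range b,
          (Sb k b').card * (exts (k + 1) b b').card = fcount k b' * 2 ^ (k + 1 - b) := by
        intro b' hb'
        rw [Finset.mem_range] at hb'
        rw [ih b' (by omega), card_exts_lt (by omega) hb']
      rw [Finset.sum_congr rfl hterms, ← Finset.sum_mul, ih b hbk, card_exts_eq (by omega)]
      -- arithmetic
      have hsum1 : (∑ b' ∈ Finset.range b, fcount k b') + fcount k b = 2 ^ b * fcount k b := by
        rw [← Finset.sum_range_succ]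
        exact fc_sum hbk
      have hpow : 2 ^ b * 2 ^ (k + 1 - b) = 2 ^ (k + 1) := by
        rw [← pow_add]
        congr 1
        omega
      have h1 : 1 ≤ 2 ^ (k + 1 - b) := Nat.one_le_two_pow
      have hx1 : fcount k b * (2 ^ (k + 1 - b) - 1)
          = fcount k b * 2 ^ (k + 1 - b) - fcount k b := by
        rw [Nat.mul_sub, mul_one]
      have hx2 : (∑ b' ∈ Finset.range b, fcount k b') * 2 ^ (k + 1 - b)
            + fcount k b * 2 ^ (k + 1 - b) = 2 ^ (k + 1) * fcount k b := by
        rw [← add_mul, hsum1, mul_comm (2 ^ b) (fcount k b), mul_assoc, hpow,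
          mul_comm (fcount k b) _]
      have hx3 : fcount k b ≤ fcount k b * 2 ^ (k + 1 - b) :=
        Nat.le_mul_of_pos_right _ (by omega)
      have hx4 : fcount (k + 1) b = 2 ^ (k + 1) * fcount k b - fcount k b := by
        rw [fc_succ hbk, Nat.sub_mul, one_mul]
      omega

/-! ### final assembly -/

def Sfin (k : ℕ) : Finset (List ℕ) := (Finset.range (k + 1)).biUnion (Sb k)

lemma mem_Sfin {k : ℕ} (hk : 1 ≤ k) (e : List ℕ) :
    e ∈ Sfin k ↔ (IsAscSeq e ∧ IsPrimitive e ∧ Avoids120 e ∧ ascents e = k) := by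
  rw [Sfin, Finset.mem_biUnion]
  constructor
  · rintro ⟨b, _, hmem⟩
    obtain ⟨h1, h2, h3, h4, _, _⟩ := (mem_Sb k b e).1 hmem
    exact ⟨h1, h2, h3, h4⟩
  · rintro ⟨h1, h2, h3, h4⟩
    have hne : e ≠ [] := by
      intro h
      subst h
      rw [show ascents [] = 0 from rfl] at h4
      omega
    have hmem : e ∈ Sb k (e.getD (e.length - 1) 0) :=
      (mem_Sb k _ e).2 ⟨h1, h2, h3, h4, hne, rfl⟩
    refine ⟨e.getD (e.length - 1) 0, Finset.mem_range.2 ?_, hmem⟩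
    by_contra hgt
    rw [Sb_empty k _ (by omega)] at hmem
    exact absurd hmem (Finset.notMem_empty e)

lemma card_Sfin (k : ℕ) : (Sfin k).card = 2 ^ ((k + 1).choose 2) := by
  rw [Sfin, Finset.card_biUnion (by
    intro b₁ hb₁ b₂ hb₂ hne12
    rw [Function.onFun, Finset.disjoint_left]
    intro e he₁ he₂
    obtain ⟨_, _, _, _, _, hl₁⟩ := (mem_Sb k b₁ e).1 he₁
    obtain ⟨_, _, _, _, _, hl₂⟩ := (mem_Sb k b₂ e).1 he₂
    exact hne12 (hl₁ ▸ hl₂ ▸ rfl))]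
  have hterms : ∀ b ∈ Finset.range (k + 1), (Sb k b).card = fcount k b := by
    intro b hb
    rw [Finset.mem_range] at hb
    exact card_Sb k b (by omega)
  rw [Finset.sum_congr rfl hterms, fc_sum (le_refl k), fc_top, ← pow_add]
  congr 1
  rw [Nat.choose_succ_succ, Nat.choose_one_right]

theorem stmt18 (k : ℕ) (hk : 1 ≤ k) :
    (∃ S : Finset (List ℕ),
      (∀ e, e ∈ S ↔ IsAscSeq e ∧ IsPrimitive e ∧ Avoids120 e ∧ ascents e = k) ∧
      ∑ e ∈ S, (1 : ℤ) ^ (e.length - k - 1) = 2 ^ (Nat.choose (k + 1) 2)) ∧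
    {e : List ℕ | IsAscSeq e ∧ IsPrimitive e ∧ Avoids120 e ∧ ascents e = k}.ncard
      = 2 ^ (k * (k + 1) / 2) := by
  constructor
  · refine ⟨Sfin k, fun e => mem_Sfin hk e, ?_⟩
    have hone : ∀ e ∈ Sfin k, (1 : ℤ) ^ (e.length - k - 1) = 1 := fun e _ => one_pow _
    rw [Finset.sum_congr rfl hone, Finset.sum_const, nsmul_eq_mul, mul_one, card_Sfin]
    push_cast
    ring
  · have hset : {e : List ℕ | IsAscSeq e ∧ IsPrimitive e ∧ Avoids120 e ∧ ascents e = k}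
        = ↑(Sfin k) := by
      ext e
      rw [Set.mem_setOf_eq, Finset.mem_coe, mem_Sfin hk]
    rw [hset, Set.ncard_coe_finset, card_Sfin]
    congr 1
    rw [Nat.choose_two_right]
    simp only [Nat.add_sub_cancel]
    rw [Nat.mul_comm]
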